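/- Suppose g, f are such that |f(x) − μ(x)| ≤ √β·σ(x) at two inputs x, x' and the EI acquisition with rescaled variance satisfies: for a ∈ ℝ with |a − μ(x)| ≤ √β·σ(x), b ∈ ℝ, and ν > 0, it holds that max{(a−b)₊ − √β·σ(x), (τ(−√β/√ν)/τ(√β/√ν))·(a−b)₊} ≤ ν^{1/2}·σ(x)·τ((μ(x)−b)/(ν^{1/2}σ(x))) ≤ (a−b)₊ + (√β + √ν)·σ(x), where (·)₊ = max{0,·} and τ(c) = cΦ(c) + φ(c). -/

import Mathlib

open Real MeasureTheory ProbabilityTheory Set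
open Filter

/-- Standard normal PDF. -/
noncomputable def stdPdf (c : ℝ) : ℝ := (Real.sqrt (2 * Real.pi))⁻¹ * Real.exp (-c ^ 2 / 2)

/-- Standard normal CDF. -/
noncomputable def stdCdf (c : ℝ) : ℝ := ∫ t in Set.Iic c, stdPdf t

/-- τ(c) = c·Φ(c) + φ(c). -/
noncomputable def tau (c : ℝ) : ℝ := c * stdCdf c + stdPdf c

lemma stdPdf_eq (c : ℝ) : stdPdf c = (Real.sqrt (2 * Real.pi))⁻¹ * Real.exp (-(1/2) * c ^ 2) := by
  rw [stdPdf]; ring_nf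

lemma stdPdf_pos (c : ℝ) : 0 < stdPdf c := by
  have h : (0:ℝ) < Real.sqrt (2 * Real.pi) := Real.sqrt_pos.2 (by positivity)
  exact mul_pos (inv_pos.2 h) (Real.exp_pos _)

lemma stdPdf_nonneg (c : ℝ) : 0 ≤ stdPdf c := (stdPdf_pos c).le

lemma stdPdf_neg (c : ℝ) : stdPdf (-c) = stdPdf c := by simp [stdPdf]

lemma continuous_stdPdf : Continuous stdPdf := by
  unfold stdPdf; fun_prop

lemma integrable_stdPdf : Integrable stdPdf := by
  have := (integrable_exp_neg_mul_sq (by norm_num : (0:ℝ) < 1/2)).const_mul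
    ((Real.sqrt (2 * Real.pi))⁻¹)
  refine this.congr ?_
  filter_upwards with x
  rw [stdPdf_eq]

lemma integral_stdPdf : ∫ t, stdPdf t = 1 := by
  simp_rw [stdPdf_eq]
  rw [MeasureTheory.integral_const_mul, integral_gaussian]
  rw [← Real.sqrt_inv, ← Real.sqrt_mul (by positivity)]
  have : (2 * π)⁻¹ * (π / (1/2)) = 1 := by
    field_simp
  rw [this, Real.sqrt_one]

lemma stdCdf_nonneg (c : ℝ) : 0 ≤ stdCdf c :=
  setIntegral_nonneg measurableSet_Iic fun x _ => stdPdf_nonneg x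

lemma stdCdf_le_one (c : ℝ) : stdCdf c ≤ 1 := by
  rw [← integral_stdPdf]
  exact setIntegral_le_integral integrable_stdPdf
    (Filter.Eventually.of_forall fun x => stdPdf_nonneg x)

lemma stdCdf_mono : Monotone stdCdf := fun x y hxy =>
  setIntegral_mono_set integrable_stdPdf.integrableOn
    (Filter.Eventually.of_forall fun t => stdPdf_nonneg t)
    (HasSubset.Subset.eventuallyLE (Iic_subset_Iic.2 hxy))

lemma hasDerivAt_neg_stdPdf (x : ℝ) : HasDerivAt (fun t => -stdPdf t) (x * stdPdf x) x := by
  have h1 : HasDerivAt (fun t : ℝ => -t ^ 2 / 2) (-x) x := by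
    have := ((hasDerivAt_pow 2 x).neg).div_const 2
    exact this.congr_deriv (by norm_num; ring)
  have h2 : HasDerivAt (fun t : ℝ => Real.exp (-t ^ 2 / 2)) (Real.exp (-x ^ 2 / 2) * (-x)) x :=
    (Real.hasDerivAt_exp _).comp x h1
  have h3 := (h2.const_mul ((Real.sqrt (2 * Real.pi))⁻¹)).neg
  simp only [stdPdf]
  exact h3.congr_deriv (by ring)

lemma tendsto_stdPdf_atBot : Filter.Tendsto stdPdf Filter.atBot (nhds 0) := by
  have h1 : Filter.Tendsto (fun t : ℝ => t ^ 2) Filter.atBot Filter.atTop := by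
    have h0 : Filter.Tendsto (fun x : ℝ => x ^ 2) Filter.atTop Filter.atTop :=
      tendsto_pow_atTop two_ne_zero
    have := h0.comp tendsto_neg_atBot_atTop
    exact this.congr fun t => by simp [Function.comp, neg_sq]
  have h2a : Filter.Tendsto (fun t : ℝ => -t ^ 2) Filter.atBot Filter.atBot := by
    rw [show (fun t : ℝ => -t ^ 2) = (fun t : ℝ => -(t ^ 2)) from rfl,
      Filter.tendsto_neg_atBot_iff]
    exact h1
  have h2 : Filter.Tendsto (fun t : ℝ => -t ^ 2 / 2) Filter.atBot Filter.atBot :=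
    h2a.atBot_div_const two_pos
  have h3 := Real.tendsto_exp_atBot.comp h2
  have h4 := h3.const_mul ((Real.sqrt (2 * Real.pi))⁻¹)
  simp only [mul_zero] at h4
  exact h4

lemma integrableOn_mul_stdPdf_Iic (x : ℝ) :
    IntegrableOn (fun t => t * stdPdf t) (Set.Iic x) := by
  have : Integrable (fun t : ℝ => (Real.sqrt (2 * Real.pi))⁻¹ * (t * Real.exp (-(1/2) * t ^ 2))) :=
    (integrable_mul_exp_neg_mul_sq (by norm_num : (0:ℝ) < 1/2)).const_mul _
  refine (this.congr ?_).integrableOn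
  filter_upwards with t
  rw [stdPdf_eq]; ring

lemma integral_Iic_mul_stdPdf (x : ℝ) :
    ∫ t in Set.Iic x, t * stdPdf t = -stdPdf x := by
  have h := MeasureTheory.integral_Iic_of_hasDerivAt_of_tendsto
    (f := fun t => -stdPdf t) (f' := fun t => t * stdPdf t) (a := x) (m := 0)
    (hasDerivAt_neg_stdPdf x).continuousAt.continuousWithinAt
    (fun t _ => hasDerivAt_neg_stdPdf t)
    (integrableOn_mul_stdPdf_Iic x)
    (by simpa using tendsto_stdPdf_atBot.neg)
  simpa using h

lemma stdCdf_add_stdCdf_neg (c : ℝ) : stdCdf c + stdCdf (-c) = 1 := by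
  have h1 : stdCdf (-c) = ∫ t in Set.Ioi c, stdPdf t := by
    have h2 : (∫ x in Set.Iic (-c), stdPdf (-x)) = ∫ x in Set.Ioi (- -c), stdPdf x :=
      integral_comp_neg_Iic (-c) stdPdf
    simp only [neg_neg] at h2
    rw [stdCdf, ← h2]
    exact setIntegral_congr_fun measurableSet_Iic fun t _ => (stdPdf_neg t).symm
  rw [h1, ← integral_stdPdf]
  exact intervalIntegral.integral_Iic_add_Ioi integrable_stdPdf.integrableOn integrable_stdPdf.integrableOn

lemma hasDerivAt_stdCdf (x : ℝ) : HasDerivAt stdCdf (stdPdf x) x := by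
  have heq : stdCdf = fun y => stdCdf 0 + ∫ t in (0:ℝ)..y, stdPdf t := by
    funext y
    rw [← intervalIntegral.integral_Iic_sub_Iic integrable_stdPdf.integrableOn
      integrable_stdPdf.integrableOn]
    simp [stdCdf]
  rw [heq]
  refine HasDerivAt.const_add _ ?_
  exact intervalIntegral.integral_hasDerivAt_right
    integrable_stdPdf.intervalIntegrable
    (continuous_stdPdf.stronglyMeasurableAtFilter _ _)
    continuous_stdPdf.continuousAt

lemma hasDerivAt_tau (x : ℝ) : HasDerivAt tau (stdCdf x) x := by
  have h1 := (hasDerivAt_id' (x := x)).mul (hasDerivAt_stdCdf x)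
  have h2 : HasDerivAt stdPdf (-(x * stdPdf x)) x := by
    have := (hasDerivAt_neg_stdPdf x).neg
    simpa [Pi.neg_def] using this
  have h3 := h1.add h2
  have htau : tau = fun y => y * stdCdf y + stdPdf y := rfl
  rw [htau]
  exact h3.congr_deriv (by ring)

lemma tau_mono : Monotone tau := by
  have hd : Differentiable ℝ tau := fun x => (hasDerivAt_tau x).differentiableAt
  refine monotone_of_deriv_nonneg hd fun x => ?_
  rw [(hasDerivAt_tau x).deriv]
  exact stdCdf_nonneg x

lemma tau_sub_tau_neg (c : ℝ) : tau c - tau (-c) = c := by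
  have h := stdCdf_add_stdCdf_neg c
  have h2 : c * (stdCdf c + stdCdf (-c)) = c * 1 := by rw [h]
  simp only [tau, stdPdf_neg]
  nlinarith [h2]

lemma mills (c : ℝ) (hc : c < 0) : -c * stdCdf c ≤ stdPdf c := by
  have hmono : ∫ t in Set.Iic c, stdPdf t ≤ ∫ t in Set.Iic c, c⁻¹ * (t * stdPdf t) := by
    refine setIntegral_mono_on integrable_stdPdf.integrableOn
      ((integrableOn_mul_stdPdf_Iic c).const_mul _) measurableSet_Iic fun t ht => ?_
    have ht' : t ≤ c := ht
    have h1 : 1 ≤ t / c := by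
      rw [le_div_iff_of_neg hc]
      linarith
    calc stdPdf t ≤ (t / c) * stdPdf t := le_mul_of_one_le_left (stdPdf_nonneg t) h1
    _ = c⁻¹ * (t * stdPdf t) := by ring
  rw [MeasureTheory.integral_const_mul, integral_Iic_mul_stdPdf] at hmono
  have h5 : stdCdf c ≤ c⁻¹ * -stdPdf c := hmono
  have hc' : (0:ℝ) < -c := by linarith
  have hcc : c * c⁻¹ = 1 := mul_inv_cancel₀ (ne_of_lt hc)
  calc -c * stdCdf c ≤ -c * (c⁻¹ * -stdPdf c) := mul_le_mul_of_nonneg_left h5 hc'.le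
  _ = (c * c⁻¹) * stdPdf c := by ring
  _ = stdPdf c := by rw [hcc, one_mul]

lemma tau_nonneg (c : ℝ) : 0 ≤ tau c := by
  rcases le_or_gt 0 c with h | h
  · have := stdCdf_nonneg c
    have := stdPdf_nonneg c
    simp only [tau]
    nlinarith
  · have := mills c h
    simp only [tau]
    nlinarith

lemma tau_ge_self (c : ℝ) : c ≤ tau c := by
  have h1 := tau_sub_tau_neg c
  have h2 := tau_nonneg (-c)
  linarith

lemma tau_pos (c : ℝ) (hc : 0 < c) : 0 < tau c :=
  lt_of_lt_of_le hc (tau_ge_self c)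

lemma tau_key (t q : ℝ) (ht : 0 < t) (hq : 0 ≤ q) :
    (tau (-t) / tau t) * q ≤ tau (q - t) := by
  have htp := tau_pos t ht
  have hneg : tau (-t) = tau t - t := by have := tau_sub_tau_neg t; linarith
  rcases le_or_gt q (tau t) with h | h
  · calc (tau (-t) / tau t) * q ≤ (tau (-t) / tau t) * tau t :=
        mul_le_mul_of_nonneg_left h (div_nonneg (tau_nonneg _) htp.le)
    _ = tau (-t) := by field_simp
    _ ≤ tau (q - t) := tau_mono (by linarith)
  · have h2 : (tau (-t) / tau t) * q = q - (t / tau t) * q := by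
      rw [hneg]; field_simp
    have h3 : t ≤ (t / tau t) * q := by
      rw [div_mul_eq_mul_div, le_div_iff₀ htp]
      nlinarith
    have h4 := tau_ge_self (q - t)
    linarith

lemma tau_zero_le_one : tau 0 ≤ 1 := by
  have h1 : tau 0 = (Real.sqrt (2 * Real.pi))⁻¹ := by
    simp [tau, stdPdf]
  rw [h1]
  have h2 : (1:ℝ) ≤ Real.sqrt (2 * Real.pi) := by
    rw [show (1:ℝ) = Real.sqrt 1 from (Real.sqrt_one).symm]
    exact Real.sqrt_le_sqrt (by nlinarith [Real.pi_gt_three])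
  exact inv_le_one_of_one_le₀ h2

lemma tau_upper (c : ℝ) : tau c ≤ max c 0 + 1 := by
  rcases le_or_gt c 0 with h | h
  · have := tau_mono h
    have h0 : tau 0 ≤ 1 := tau_zero_le_one
    have : tau c ≤ 1 := le_trans (tau_mono h) h0
    have : max c 0 = 0 := max_eq_right h
    simp [this]
    linarith [le_trans (tau_mono h) h0]
  · have hid := tau_sub_tau_neg c
    have h2 : tau (-c) ≤ tau 0 := tau_mono (by linarith)
    have : max c 0 = c := max_eq_left h.le
    rw [this]
    linarith [tau_zero_le_one]

theorem rescaled_ei_sandwich (μ a b σ ν β : ℝ)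
    (hσ : 0 ≤ σ) (hν : 0 < ν) (hβ : 0 < β)
    (hconf : |a - μ| ≤ Real.sqrt β * σ) :
    max (max (a - b) 0 - Real.sqrt β * σ)
        ((tau (-Real.sqrt β / Real.sqrt ν) / tau (Real.sqrt β / Real.sqrt ν)) * max (a - b) 0) ≤
      (if σ = 0 then max (μ - b) 0
        else Real.sqrt ν * σ * tau ((μ - b) / (Real.sqrt ν * σ))) ∧
    (if σ = 0 then max (μ - b) 0
        else Real.sqrt ν * σ * tau ((μ - b) / (Real.sqrt ν * σ))) ≤
      max (a - b) 0 + (Real.sqrt β + Real.sqrt ν) * σ := by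
  have hsβ : 0 < Real.sqrt β := Real.sqrt_pos.2 hβ
  have hsν : 0 < Real.sqrt ν := Real.sqrt_pos.2 hν
  set t : ℝ := Real.sqrt β / Real.sqrt ν with htdef
  have ht : 0 < t := div_pos hsβ hsν
  have hτt : 0 < tau t := tau_pos t ht
  have hratio_nonneg : 0 ≤ tau (-t) / tau t := div_nonneg (tau_nonneg _) hτt.le
  have hratio_le_one : tau (-t) / tau t ≤ 1 := by
    rw [div_le_one hτt]
    exact tau_mono (by linarith)
  have hnegt : -Real.sqrt β / Real.sqrt ν = -t := by rw [htdef]; ring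
  rw [hnegt]
  rcases eq_or_lt_of_le hσ with hσ0 | hσ0
  · -- σ = 0
    have hσ0 : σ = 0 := hσ0.symm
    have haμ : a = μ := by
      have : |a - μ| ≤ 0 := by rw [hσ0] at hconf; simpa using hconf
      have := abs_nonpos_iff.1 this
      linarith
    simp only [hσ0, if_pos rfl, mul_zero, sub_zero, haμ]
    constructor
    · apply max_le le_rfl
      calc tau (-t) / tau t * max (μ - b) 0 ≤ 1 * max (μ - b) 0 :=
          mul_le_mul_of_nonneg_right hratio_le_one (le_max_right _ _)
      _ = max (μ - b) 0 := one_mul _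
    · simp
  · -- σ > 0
    have hσne : σ ≠ 0 := ne_of_gt hσ0
    rw [if_neg hσne]
    have hνσ : 0 < Real.sqrt ν * σ := mul_pos hsν hσ0
    set s : ℝ := (μ - b) / (Real.sqrt ν * σ) with hsdef
    have hEIlow : max (μ - b) 0 ≤ Real.sqrt ν * σ * tau s := by
      rcases le_or_gt (μ - b) 0 with h | h
      · rw [max_eq_right h]
        exact mul_nonneg hνσ.le (tau_nonneg s)
      · rw [max_eq_left h.le]
        have := tau_ge_self s
        calc μ - b = Real.sqrt ν * σ * s := by
              rw [hsdef]; field_simp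
        _ ≤ Real.sqrt ν * σ * tau s := mul_le_mul_of_nonneg_left (tau_ge_self s) hνσ.le
    have hconf' : a - Real.sqrt β * σ ≤ μ := by
      have := abs_le.1 hconf
      linarith [this.1]
    constructor
    · apply max_le
      · -- max (a-b) 0 - √β σ ≤ EI
        have h1 : max (a - b) 0 - Real.sqrt β * σ ≤ max (μ - b) 0 := by
          rcases le_or_gt (a - b) 0 with h | h
          · rw [max_eq_right h]
            have : 0 ≤ Real.sqrt β * σ := by positivity
            linarith [le_max_right (μ - b) (0:ℝ)]
          · rw [max_eq_left h.le]
            have h2 : a - b - Real.sqrt β * σ ≤ μ - b := by linarith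
            calc a - b - Real.sqrt β * σ ≤ μ - b := h2
            _ ≤ max (μ - b) 0 := le_max_left _ _
        linarith [hEIlow]
      · -- ratio bound
        rcases le_or_gt (a - b) 0 with h | h
        · rw [max_eq_right h, mul_zero]
          exact mul_nonneg hνσ.le (tau_nonneg s)
        · rw [max_eq_left h.le]
          set q : ℝ := (a - b) / (Real.sqrt ν * σ) with hqdef
          have hq : 0 ≤ q := by positivity
          have hsq : q - t ≤ s := by
            have h5 : (a - b) - Real.sqrt β * σ ≤ μ - b := by linarith
            have h6 : ((a - b) - Real.sqrt β * σ) / (Real.sqrt ν * σ) ≤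
                (μ - b) / (Real.sqrt ν * σ) := by gcongr
            calc q - t = ((a - b) - Real.sqrt β * σ) / (Real.sqrt ν * σ) := by
                  rw [hqdef, htdef]; field_simp
            _ ≤ s := h6
          have hkey := tau_key t q ht hq
          have h2 : tau (q - t) ≤ tau s := tau_mono hsq
          have h3 : tau (-t) / tau t * (a - b) = Real.sqrt ν * σ * (tau (-t) / tau t * q) := by
            rw [hqdef]; field_simp
          rw [h3]
          exact mul_le_mul_of_nonneg_left (le_trans hkey h2) hνσ.le
    · -- upper bound
      have h1 : tau s ≤ max s 0 + 1 := tau_upper s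
      have h2 : Real.sqrt ν * σ * tau s ≤ Real.sqrt ν * σ * (max s 0 + 1) :=
        mul_le_mul_of_nonneg_left h1 hνσ.le
      have h3 : Real.sqrt ν * σ * max s 0 = max (μ - b) 0 := by
        rw [hsdef]
        rcases le_or_gt (μ - b) 0 with h | h
        · rw [max_eq_right (by exact div_nonpos_of_nonpos_of_nonneg h hνσ.le), max_eq_right h,
            mul_zero]
        · rw [max_eq_left (le_of_lt (div_pos h hνσ)), max_eq_left h.le]
          field_simp
      have h4 : max (μ - b) 0 ≤ max (a - b) 0 + Real.sqrt β * σ := by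
        have haμ' : μ - b ≤ a - b + Real.sqrt β * σ := by
          have := abs_le.1 hconf
          linarith [this.2]
        rcases le_or_gt (μ - b) 0 with h | h
        · rw [max_eq_right h]
          positivity
        · rw [max_eq_left h.le]
          calc μ - b ≤ a - b + Real.sqrt β * σ := haμ'
          _ ≤ max (a - b) 0 + Real.sqrt β * σ := by
              have := le_max_left (a - b) (0:ℝ); linarith
      calc Real.sqrt ν * σ * tau s ≤ Real.sqrt ν * σ * max s 0 + Real.sqrt ν * σ := by
            nlinarith [h2]
      _ = max (μ - b) 0 + Real.sqrt ν * σ := by rw [h3]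
      _ ≤ max (a - b) 0 + Real.sqrt β * σ + Real.sqrt ν * σ := by linarith
      _ = max (a - b) 0 + (Real.sqrt β + Real.sqrt ν) * σ := by ring
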